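/- Let (X,d) be a metric space. The following are equivalent: (a) (X,d) is complete; (b) for every metric space (Y,ρ), every continuous function f : (X,d) → (Y,ρ) is strongly uniformly continuous on every totally bounded subset of X; (c) for every metric space (Y,ρ), every continuous function f : (X,d) → (Y,ρ) is strongly uniformly continuous on the range of each Cauchy sequence in X; (d) every continuous function f : (X,d) → ℝ is strongly uniformly continuous on the range of each Cauchy sequence in X. -/

import Mathlib

universe u v

/-- `f` is strongly uniformly continuous on `B` if for every `ε > 0` there is a `δ > 0` such
that whenever `dist x y < δ` and `{x, y} ∩ B ≠ ∅`, we have `dist (f x) (f y) < ε`. -/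
def StrongUnifContOn {X : Type u} {Y : Type v} [MetricSpace X] [MetricSpace Y]
    (f : X → Y) (B : Set X) : Prop :=
  ∀ ε > (0 : ℝ), ∃ δ > (0 : ℝ), ∀ x y : X,
    dist x y < δ → (x ∈ B ∨ y ∈ B) → dist (f x) (f y) < ε

open Filter Topology Set

/-- From a sequence whose values escape every finite set, extract a strictly monotone
subsequence with pairwise distinct values. -/
lemma exists_inj_subseq {X : Type u} (w : ℕ → X)
    (h : ∀ k : ℕ, ∀ s : Finset X, ∃ n, k ≤ n ∧ w n ∉ s) :
    ∃ φ : ℕ → ℕ, StrictMono φ ∧ Function.Injective (w ∘ φ) := by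
  classical
  choose g hg1 hg2 using h
  let F : ℕ → ℕ × Finset X := fun k => Nat.rec (g 0 ∅, {w (g 0 ∅)})
      (fun _ p => (g (p.1 + 1) p.2, insert (w (g (p.1 + 1) p.2)) p.2)) k
  have hstep : ∀ k, F (k + 1) = (g ((F k).1 + 1) (F k).2,
      insert (w (g ((F k).1 + 1) (F k).2)) (F k).2) := fun k => rfl
  have hmem : ∀ k, w (F k).1 ∈ (F k).2 := by
    intro k
    induction k with
    | zero => simp [F]
    | succ n ih => rw [hstep]; exact Finset.mem_insert_self _ _
  have hmono1 : ∀ k, (F k).1 < (F (k + 1)).1 := by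
    intro k; rw [hstep]
    exact lt_of_lt_of_le (Nat.lt_succ_self _) (hg1 _ _)
  have hsub : ∀ k, (F k).2 ⊆ (F (k + 1)).2 := by
    intro k; rw [hstep]; exact Finset.subset_insert _ _
  have hsub' : ∀ j k, j ≤ k → (F j).2 ⊆ (F k).2 := by
    intro j k hjk
    induction k with
    | zero => simp_all
    | succ n ih =>
      rcases Nat.lt_succ_iff_lt_or_eq.mp (Nat.lt_succ_of_le hjk) with h' | h'
      · exact (ih (Nat.lt_succ_iff.mp h')).trans (hsub n)
      · subst h'; exact fun _ hx => hx
  have hnot : ∀ k, w (F (k + 1)).1 ∉ (F k).2 := by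
    intro k; rw [hstep]; exact hg2 _ _
  refine ⟨fun k => (F k).1, strictMono_nat_of_lt_succ hmono1, ?_⟩
  have key : ∀ j k, j < k → w (F j).1 ≠ w (F k).1 := by
    intro j k hjk
    obtain ⟨m, rfl⟩ : ∃ m, k = m + 1 := ⟨k - 1, (Nat.succ_pred_eq_of_pos (by omega)).symm⟩
    intro he
    exact hnot m (he ▸ hsub' j m (Nat.lt_succ_iff.mp hjk) (hmem j))
  intro j k hjk
  by_contra hne
  rcases lt_trichotomy j k with h' | h' | h'
  · exact key j k h' hjk
  · exact hne h'
  · exact key k j h' hjk.symm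

theorem complete_iff_strongUnifCont_on_totallyBounded {X : Type u} [MetricSpace X] :
    List.TFAE
      [CompleteSpace X,
       ∀ (Y : Type v) [MetricSpace Y] (f : X → Y), Continuous f →
         ∀ B : Set X, TotallyBounded B → StrongUnifContOn f B,
       ∀ (Y : Type v) [MetricSpace Y] (f : X → Y), Continuous f →
         ∀ u : ℕ → X, CauchySeq u → StrongUnifContOn f (Set.range u),
       ∀ f : X → ℝ, Continuous f →
         ∀ u : ℕ → X, CauchySeq u → StrongUnifContOn f (Set.range u)] := by
  tfae_have 1 → 2 := by
    intro h1 Y _ f hf B hB ε hε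
    by_contra hc
    push_neg at hc
    have hc' : ∀ n : ℕ, ∃ x y : X, dist x y < 1 / (n + 1) ∧ (x ∈ B ∨ y ∈ B) ∧
        ε ≤ dist (f x) (f y) := by
      intro n
      obtain ⟨x, y, h₁, h₂, h₃⟩ := hc (1 / (n + 1)) (by positivity)
      exact ⟨x, y, h₁, h₂, h₃⟩
    choose x y hd hm hge using hc'
    classical
    set z : ℕ → X := fun n => if x n ∈ B then x n else y n with hz
    set wseq : ℕ → X := fun n => if x n ∈ B then y n else x n with hw
    have hzB : ∀ n, z n ∈ B := by
      intro n
      simp only [hz]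
      split
      · assumption
      · rcases hm n with h | h
        · tauto
        · exact h
    have hdzw : ∀ n, dist (z n) (wseq n) < 1 / (n + 1) := by
      intro n
      simp only [hz, hw]
      split
      · exact hd n
      · rw [dist_comm]; exact hd n
    have hgezw : ∀ n, ε ≤ dist (f (z n)) (f (wseq n)) := by
      intro n
      simp only [hz, hw]
      split
      · exact hge n
      · rw [dist_comm]; exact hge n
    have hK : IsCompact (closure B) :=
      TotallyBounded.isCompact_of_isClosed hB.closure isClosed_closure
    obtain ⟨p, -, φ, hφ, hzp⟩ := hK.tendsto_subseq (fun n => subset_closure (hzB n))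
    have hφtop : Tendsto φ atTop atTop := hφ.tendsto_atTop
    have h0 : Tendsto (fun k => dist (z (φ k)) (wseq (φ k))) atTop (𝓝 0) := by
      have hup : Tendsto (fun k : ℕ => 1 / ((φ k : ℝ) + 1)) atTop (𝓝 0) :=
        (tendsto_one_div_add_atTop_nhds_zero_nat).comp hφtop
      refine squeeze_zero (fun k => dist_nonneg) (fun k => le_of_lt (hdzw (φ k))) hup
    have hwp : Tendsto (wseq ∘ φ) atTop (𝓝 p) := by
      rw [tendsto_iff_dist_tendsto_zero]
      have : ∀ k, dist ((wseq ∘ φ) k) p ≤ dist (z (φ k)) (wseq (φ k)) + dist ((z ∘ φ) k) p := by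
        intro k
        calc dist ((wseq ∘ φ) k) p ≤ dist ((wseq ∘ φ) k) ((z ∘ φ) k) + dist ((z ∘ φ) k) p :=
              dist_triangle _ _ _
          _ = dist (z (φ k)) (wseq (φ k)) + dist ((z ∘ φ) k) p := by rw [dist_comm]; rfl
      have hzp0 : Tendsto (fun k => dist ((z ∘ φ) k) p) atTop (𝓝 0) :=
        tendsto_iff_dist_tendsto_zero.mp hzp
      have hsum : Tendsto (fun k => dist (z (φ k)) (wseq (φ k)) + dist ((z ∘ φ) k) p)
          atTop (𝓝 0) := by simpa using h0.add hzp0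
      exact squeeze_zero (fun k => dist_nonneg) this hsum
    have hfz : Tendsto (f ∘ z ∘ φ) atTop (𝓝 (f p)) := (hf.tendsto p).comp hzp
    have hfw : Tendsto (f ∘ wseq ∘ φ) atTop (𝓝 (f p)) := (hf.tendsto p).comp hwp
    have hdist : Tendsto (fun k => dist (f (z (φ k))) (f (wseq (φ k)))) atTop (𝓝 0) := by
      simpa using hfz.dist hfw
    have := (hdist.eventually (eventually_lt_nhds hε)).exists
    obtain ⟨k, hk⟩ := this
    exact absurd (hgezw (φ k)) (not_le.mpr hk)
  tfae_have 2 → 3 := by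
    intro h2 Y _ f hf u hu
    exact h2 Y f hf _ hu.totallyBounded_range
  tfae_have 3 → 4 := by
    intro h3 f hf u hu ε hε
    have hcont : Continuous (fun x => ULift.up.{v} (f x)) :=
      continuous_uliftUp.comp hf
    obtain ⟨δ, hδ, hδ'⟩ := h3 (ULift.{v} ℝ) (fun x => ULift.up (f x)) hcont u hu ε hε
    exact ⟨δ, hδ, fun x y h₁ h₂ => hδ' x y h₁ h₂⟩
  tfae_have 4 → 1 := by
    intro h4
    apply Metric.complete_of_cauchySeq_tendsto
    intro u hu
    by_contra hlim
    push_neg at hlim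
    have hcl : ∀ x : X, ¬ MapClusterPt x atTop u := fun x hx =>
      hlim x (le_nhds_of_cauchy_adhp hu hx)
    have hfib : ∀ c : X, {n | u n = c}.Finite := by
      intro c
      by_contra hinf
      apply hcl c
      rw [mapClusterPt_iff_frequently]
      intro s hs
      have hfreq : ∃ᶠ n in atTop, u n = c :=
        Nat.frequently_atTop_iff_infinite.mpr hinf
      exact hfreq.mono fun n hn => hn ▸ mem_of_mem_nhds hs
    have key : ∀ k : ℕ, ∀ s : Finset X, ∃ n, k ≤ n ∧ u n ∉ s := by
      intro k s
      have hfin : {n | u n ∈ s}.Finite := by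
        have : {n | u n ∈ s} = ⋃ c ∈ s, {n | u n = c} := by
          ext n; simp [Set.mem_iUnion]
        rw [this]
        exact Set.Finite.biUnion s.finite_toSet fun c _ => hfib c
      obtain ⟨m, hm⟩ := hfin.bddAbove
      refine ⟨max k (m + 1), le_max_left _ _, fun hmem => ?_⟩
      have := hm hmem
      have : m + 1 ≤ m := le_trans (le_max_right k (m + 1)) this
      omega
    obtain ⟨φ, hφ, hinj⟩ := exists_inj_subseq u key
    set v : ℕ → X := u ∘ φ with hv
    have hvC : CauchySeq v := hu.comp_tendsto hφ.tendsto_atTop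
    have hvlim : ∀ a : X, ¬ Tendsto v atTop (𝓝 a) := fun a ha =>
      hlim a (tendsto_nhds_of_cauchySeq_of_subseq hu hφ.tendsto_atTop ha)
    have hvcl : ∀ x : X, ¬ MapClusterPt x atTop v := fun x hx =>
      hvlim x (le_nhds_of_cauchy_adhp hvC hx)
    -- images of subsets of indices are closed
    have closed_im : ∀ s : Set ℕ, IsClosed (v '' s) := by
      intro s
      rw [← isSeqClosed_iff_isClosed]
      intro a x ha hx
      by_contra hxs
      apply hvcl x
      rw [mapClusterPt_iff_frequently]
      intro U hU
      rw [frequently_atTop]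
      intro N
      have hFfin : (v '' (s ∩ Set.Iio N)).Finite :=
        (Set.finite_Iio N).inter_of_right s |>.image v
      have hxF : x ∉ v '' (s ∩ Set.Iio N) := fun h =>
        hxs (Set.image_mono (Set.inter_subset_left) h)
      have hW : U ∩ (v '' (s ∩ Set.Iio N))ᶜ ∈ 𝓝 x :=
        Filter.inter_mem hU (hFfin.isClosed.isOpen_compl.mem_nhds hxF)
      obtain ⟨k, hk⟩ := (hx.eventually (eventually_mem_nhds_iff.mpr hW)).exists
      have hak : a k ∈ U ∩ (v '' (s ∩ Set.Iio N))ᶜ := mem_of_mem_nhds hk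
      obtain ⟨n, hns, hn⟩ := ha k
      refine ⟨n, ?_, by rw [hn]; exact hak.1⟩
      by_contra hnN
      exact hak.2 ⟨n, ⟨hns, by simp only [Set.mem_Iio]; omega⟩, hn⟩
    have hA : IsClosed (v '' {n | Even n}) := closed_im _
    have hB : IsClosed (v '' {n | ¬ Even n}) := closed_im _
    have hdisj : Disjoint (v '' {n | Even n}) (v '' {n | ¬ Even n}) := by
      rw [Set.disjoint_left]
      rintro a ⟨i, hi, rfl⟩ ⟨j, hj, hji⟩
      exact hj (hinj hji.symm ▸ hi)
    obtain ⟨f, hf0, hf1, -⟩ := exists_continuous_zero_one_of_isClosed hA hB hdisj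
    obtain ⟨δ, hδ, hδ'⟩ := h4 f f.continuous v hvC (1/2) (by norm_num)
    obtain ⟨N, hN⟩ := Metric.cauchySeq_iff.mp hvC δ hδ
    have h1 : f (v (2 * N)) = 0 := hf0 ⟨2 * N, ⟨N, (two_mul N)⟩, rfl⟩
    have h2 : f (v (2 * N + 1)) = 1 := hf1 ⟨2 * N + 1, by simp [Nat.even_add_one, parity_simps], rfl⟩
    have hlt := hδ' (v (2 * N)) (v (2 * N + 1))
      (hN (2 * N) (by omega) (2 * N + 1) (by omega))
      (Or.inl ⟨2 * N, rfl⟩)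
    rw [h1, h2] at hlt
    norm_num [Real.dist_eq] at hlt
  tfae_finish
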